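/- Let X be a spherical 2-design of size n in √m S^{m-1} which is an s-distance set, and let q_0, …, q_s be the predegree polynomials of X. Then ∑_{i=0}^s q_i(t) = n · ∏_{α ∈ A(X)} (t - α)/(m - α) as polynomials modulo Z*(t) = ∏_{α ∈ A'(X)}(t - α). -/

import Mathlib

open scoped InnerProductSpace Classical

noncomputable section

variable {V : Type*} [NormedAddCommGroup V] [InnerProductSpace ℝ V]

/-- `X` lies on the sphere of squared radius `m` (radius `√m`). -/
def onSphere (m : ℝ) (X : Finset V) : Prop := ∀ x ∈ X, ⟪x, x⟫_ℝ = m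

/-- The normalized Gram matrix `G` of `X`. -/
def gram (X : Finset V) : Matrix X X ℝ :=
  Matrix.of fun x y => (1 / (X.card : ℝ)) * ⟪(x : V), (y : V)⟫_ℝ

/-- The two conditions characterizing spherical 2-designs: `GJ = 0` and `G² = G`. -/
def IsTwoDesign (X : Finset V) : Prop :=
  (∀ x ∈ X, ∑ y ∈ X, ⟪x, y⟫_ℝ = 0) ∧
  (∀ x ∈ X, ∀ y ∈ X, (1 / (X.card : ℝ)) * ∑ z ∈ X, ⟪x, z⟫_ℝ * ⟪z, y⟫_ℝ = ⟪x, y⟫_ℝ)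

/-- `Pol_k(X)`: span of the zonal polynomials of degree at most `k`. -/
def Pol (X : Finset V) (k : ℕ) : Submodule ℝ (X → ℝ) :=
  Submodule.span ℝ {f | ∃ a ∈ X, ∃ p : Polynomial ℝ,
    p.natDegree ≤ k ∧ f = fun x => p.eval ⟪a, x.1⟫_ℝ}

/-- The inner product `(f,g) = (1/n) ∑ f(x) g(x)` on `C(X)`. -/
def inn (X : Finset V) (f g : X → ℝ) : ℝ := (1 / (X.card : ℝ)) * ∑ x, f x * g x

def innL (X : Finset V) (f : X → ℝ) : (X → ℝ) →ₗ[ℝ] ℝ where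
  toFun g := inn X f g
  map_add' g h := by
    simp only [inn, Pi.add_apply, mul_add, Finset.sum_add_distrib]
  map_smul' c g := by
    simp only [inn, Pi.smul_apply, smul_eq_mul, RingHom.id_apply]
    rw [Finset.sum_congr rfl (fun x _ => by ring : ∀ x ∈ Finset.univ, f x * (c * g x) = c * (f x * g x)),
      ← Finset.mul_sum]
    ring

/-- The orthogonal complement of `W` with respect to `inn`. -/
def perp (X : Finset V) (W : Submodule ℝ (X → ℝ)) : Submodule ℝ (X → ℝ) :=
  ⨅ f ∈ W, LinearMap.ker (innL X f)

/-- The harmonic spaces `Harm_k(X)`. -/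
def Harm (X : Finset V) : ℕ → Submodule ℝ (X → ℝ)
  | 0 => Pol X 0
  | (k+1) => Pol X (k+1) ⊓ perp X (Pol X k)

/-- `F` is the matrix of the orthogonal projection of `C(X)` onto `W`
(with respect to the inner product `inn`). -/
def IsProjOnto (X : Finset V) (W : Submodule ℝ (X → ℝ)) (F : Matrix X X ℝ) : Prop :=
  (∀ f, F.mulVec f ∈ W) ∧ (∀ f ∈ W, F.mulVec f = f) ∧ (∀ f ∈ perp X W, F.mulVec f = 0)

/-- The degree `S` of `X`: the least `i` with `Pol_i(X) = C(X)`. -/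
def degS (X : Finset V) : ℕ := sInf {i | Pol X i = ⊤}

/-- `A(X)`, the set of inner products between distinct points of `X`. -/
def Aset (X : Finset V) : Finset ℝ :=
  ((X ×ˢ X).filter fun p => p.1 ≠ p.2).image fun p => ⟪p.1, p.2⟫_ℝ

/-- `A'(X) = A(X) ∪ {m}`. -/
def Aset' (m : ℝ) (X : Finset V) : Finset ℝ := insert m (Aset X)

/-- `κ_α`, the number of ordered pairs of points of `X` with inner product `α`. -/
def kappa (X : Finset V) (α : ℝ) : ℕ := ((X ×ˢ X).filter fun p => ⟪p.1, p.2⟫_ℝ = α).card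

/-- The inner product `⟨p,q⟩ = (1/n²) ∑_{α ∈ A'(X)} κ_α p(α) q(α)` on polynomials. -/
def pInn (m : ℝ) (X : Finset V) (p q : Polynomial ℝ) : ℝ :=
  (1 / (X.card : ℝ) ^ 2) * ∑ α ∈ Aset' m X, (kappa X α : ℝ) * (p.eval α * q.eval α)

/-- `q` is the family of predegree polynomials of `X`. -/
def IsPredegree (m : ℝ) (X : Finset V) (s : ℕ) (q : ℕ → Polynomial ℝ) : Prop :=
  (∀ k ≤ s, (q k).natDegree = k ∧ q k ≠ 0) ∧
  (∀ k ≤ s, ∀ h ≤ s, pInn m X (q k) (q h) = if k = h then (q k).eval m else 0)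

/-- The relation matrix `A_α` of `X`. -/
def relMat (X : Finset V) (α : ℝ) : Matrix X X ℝ :=
  Matrix.of fun x y => if ⟪(x : V), (y : V)⟫_ℝ = α then 1 else 0

/-- `X` carries the structure of a `Q`-polynomial association scheme with respect to
the idempotents `F_0, …, F_s` (whose relations are given by the inner products). -/
def CarriesQPolyScheme (m : ℝ) (X : Finset V) (s : ℕ) (F : ℕ → Matrix X X ℝ) : Prop :=
  (∀ α ∈ Aset' m X, ∀ β ∈ Aset' m X, relMat X α * relMat X β ∈
      Submodule.span ℝ (relMat X '' (Aset' m X : Set ℝ))) ∧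
  (∀ i ≤ s, F i ∈ Submodule.span ℝ (relMat X '' (Aset' m X : Set ℝ))) ∧
  (∀ i ≤ s, ∀ j ≤ s, F i * F j = if i = j then F i else 0) ∧
  (∑ i ∈ Finset.range (s + 1), F i = 1) ∧
  (F 0 = Matrix.of fun _ _ => 1 / (X.card : ℝ)) ∧
  (∀ i ≤ s, ∃ v : Polynomial ℝ, v.natDegree = i ∧
      F i = Matrix.of fun x y => (1 / (X.card : ℝ)) * v.eval ((X.card : ℝ) * F 1 x y))


open Polynomial in
lemma prod_X_sub_C_dvd_of_roots (s : Finset ℝ) (p : Polynomial ℝ)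
    (h : ∀ a ∈ s, p.eval a = 0) : (∏ a ∈ s, (X - C a)) ∣ p := by
  classical
  induction s using Finset.induction_on generalizing p with
  | empty => simpa using one_dvd p
  | @insert a s ha ih =>
    obtain ⟨r, hr⟩ := (dvd_iff_isRoot (p := p) (a := a)).2 (h a (Finset.mem_insert_self a s))
    rw [Finset.prod_insert ha, hr]
    exact mul_dvd_mul_left _ (ih r fun b hb => by
      have hb' := h b (Finset.mem_insert_of_mem hb)
      have hba : b - a ≠ 0 := sub_ne_zero.2 (fun e => ha (e ▸ hb))
      rw [hr] at hb'
      simp only [eval_mul, eval_sub, eval_X, eval_C] at hb'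
      exact (mul_eq_zero.1 hb').resolve_left hba)

lemma pInn_linear_right (m : ℝ) (X : Finset V) (D r w : Polynomial ℝ) (c : ℝ) :
    pInn m X D (r + c • w) = pInn m X D r + c * pInn m X D w := by
  have hpt : ∀ α : ℝ, (kappa X α : ℝ) * (D.eval α * (r.eval α + c * w.eval α))
      = (kappa X α : ℝ) * (D.eval α * r.eval α)
        + c * ((kappa X α : ℝ) * (D.eval α * w.eval α)) := fun α => by ring
  simp only [pInn, Polynomial.eval_add, Polynomial.eval_smul, smul_eq_mul, hpt]
  rw [Finset.sum_add_distrib, ← Finset.mul_sum]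
  ring

lemma pInn_sub_left (m : ℝ) (X : Finset V) (D E r : Polynomial ℝ) :
    pInn m X (D - E) r = pInn m X D r - pInn m X E r := by
  have hpt : ∀ α : ℝ, (kappa X α : ℝ) * ((D.eval α - E.eval α) * r.eval α)
      = (kappa X α : ℝ) * (D.eval α * r.eval α)
        - (kappa X α : ℝ) * (E.eval α * r.eval α) := fun α => by ring
  simp only [pInn, Polynomial.eval_sub, hpt]
  rw [Finset.sum_sub_distrib]
  ring

lemma pInn_sum_left (m : ℝ) (X : Finset V) {ι : Type*} (t : Finset ι)
    (f : ι → Polynomial ℝ) (r : Polynomial ℝ) :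
    pInn m X (∑ i ∈ t, f i) r = ∑ i ∈ t, pInn m X (f i) r := by
  simp only [pInn, Polynomial.eval_finset_sum, Finset.sum_mul, Finset.mul_sum]
  rw [Finset.sum_comm]

theorem statement_6 {m : ℕ} (X : Finset (EuclideanSpace ℝ (Fin m))) (hne : X.Nonempty)
    (hsph : onSphere (m : ℝ) X) (hdes : IsTwoDesign X) (s : ℕ) (hs : (Aset X).card = s)
    (q : ℕ → Polynomial ℝ) (hq : IsPredegree (m : ℝ) X s q) :
    (∏ α ∈ Aset' (m : ℝ) X, (Polynomial.X - Polynomial.C α)) ∣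
      ((∑ i ∈ Finset.range (s + 1), q i) -
        Polynomial.C (X.card : ℝ) *
          ∏ α ∈ Aset X, Polynomial.C (((m : ℝ) - α)⁻¹) * (Polynomial.X - Polynomial.C α)) := by
  classical
  have hn0 : (X.card : ℝ) ≠ 0 := Nat.cast_ne_zero.mpr hne.card_pos.ne'
  -- any two points of X with inner product m are equal
  have heq : ∀ x ∈ X, ∀ y ∈ X, ⟪x, y⟫_ℝ = (m : ℝ) → x = y := by
    intro x hx y hy hxy
    have h1 := hsph x hx
    have h2 := hsph y hy
    have h0 : ⟪x - y, x - y⟫_ℝ = 0 := by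
      rw [real_inner_sub_sub_self, h1, h2, hxy]; ring
    exact sub_eq_zero.1 (inner_self_eq_zero.1 h0)
  have hmA : (m : ℝ) ∉ Aset X := by
    intro hmem
    simp only [Aset, Finset.mem_image, Finset.mem_filter, Finset.mem_product] at hmem
    obtain ⟨⟨x, y⟩, ⟨⟨hx, hy⟩, hxy⟩, hip⟩ := hmem
    exact hxy (heq x hx y hy hip)
  have hA'card : (Aset' (m : ℝ) X).card = s + 1 := by
    rw [Aset', Finset.card_insert_of_notMem hmA, hs]
  have hκm : (kappa X (m : ℝ) : ℝ) = (X.card : ℝ) := by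
    have hfil : ((X ×ˢ X).filter fun p => ⟪p.1, p.2⟫_ℝ = (m : ℝ))
        = X.image (fun x => (x, x)) := by
      ext ⟨x, y⟩
      simp only [Finset.mem_filter, Finset.mem_product, Finset.mem_image, Prod.mk.injEq]
      constructor
      · rintro ⟨⟨hx, hy⟩, hip⟩
        exact ⟨x, hx, rfl, heq x hx y hy hip⟩
      · rintro ⟨a, ha, rfl, rfl⟩
        exact ⟨⟨ha, ha⟩, hsph a ha⟩
    rw [kappa, hfil, Finset.card_image_of_injective _ (fun a b h => congrArg Prod.fst h)]
  have hκpos : ∀ β ∈ Aset' (m : ℝ) X, (0 : ℝ) < (kappa X β : ℝ) := by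
    intro β hβ
    rw [Aset', Finset.mem_insert] at hβ
    have : 0 < kappa X β := by
      rcases hβ with rfl | hβ
      · obtain ⟨x, hx⟩ := hne
        refine Finset.card_pos.2 ⟨(x, x), Finset.mem_filter.2 ⟨Finset.mem_product.2 ⟨hx, hx⟩, hsph x hx⟩⟩
      · simp only [Aset, Finset.mem_image, Finset.mem_filter, Finset.mem_product] at hβ
        obtain ⟨⟨x, y⟩, ⟨⟨hx, hy⟩, _⟩, hip⟩ := hβ
        exact Finset.card_pos.2 ⟨(x, y), Finset.mem_filter.2 ⟨Finset.mem_product.2 ⟨hx, hy⟩, hip⟩⟩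
    exact_mod_cast this
  set Gp : Polynomial ℝ := Polynomial.C (X.card : ℝ) *
      ∏ α ∈ Aset X, Polynomial.C (((m : ℝ) - α)⁻¹) * (Polynomial.X - Polynomial.C α) with hGp
  set Pp : Polynomial ℝ := ∑ i ∈ Finset.range (s + 1), q i with hPp
  have hGm : Gp.eval (m : ℝ) = (X.card : ℝ) := by
    rw [hGp]
    simp only [Polynomial.eval_mul, Polynomial.eval_C, Polynomial.eval_prod,
      Polynomial.eval_sub, Polynomial.eval_X]
    rw [Finset.prod_congr rfl (fun α hα => inv_mul_cancel₀
      (sub_ne_zero.2 (fun e => hmA (by rw [e]; exact hα)))), Finset.prod_const_one, mul_one]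
  have hGA : ∀ α ∈ Aset X, Gp.eval α = 0 := by
    intro α hα
    rw [hGp]
    simp only [Polynomial.eval_mul, Polynomial.eval_C, Polynomial.eval_prod,
      Polynomial.eval_sub, Polynomial.eval_X]
    rw [Finset.prod_eq_zero hα (by simp), mul_zero]
  -- the difference is pInn-orthogonal to all q k
  have hQ0 : ∀ k ≤ s, pInn (m : ℝ) X (Pp - Gp) (q k) = 0 := by
    intro k hk
    rw [pInn_sub_left]
    have hP : pInn (m : ℝ) X Pp (q k) = (q k).eval (m : ℝ) := by
      rw [hPp, pInn_sum_left]
      rw [Finset.sum_congr rfl (fun i hi =>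
        hq.2 i (Nat.lt_succ_iff.1 (Finset.mem_range.1 hi)) k hk)]
      rw [Finset.sum_ite_eq' (Finset.range (s + 1)) k (fun i => (q i).eval (m : ℝ))]
      simp [Nat.lt_succ_iff.2 hk]
    have hG : pInn (m : ℝ) X Gp (q k) = (q k).eval (m : ℝ) := by
      rw [pInn, Aset', Finset.sum_insert hmA,
        Finset.sum_eq_zero (fun α hα => by rw [hGA α hα, zero_mul, mul_zero]), add_zero,
        hκm, hGm]
      field_simp
    rw [hP, hG, sub_self]
  have hDz : pInn (m : ℝ) X (Pp - Gp) 0 = 0 := by simp [pInn]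
  -- induction: orthogonal to every polynomial of degree ≤ s
  have key : ∀ d, d ≤ s → ∀ p : Polynomial ℝ, p.natDegree ≤ d →
      pInn (m : ℝ) X (Pp - Gp) p = 0 := by
    intro d
    induction d with
    | zero =>
      intro _ p hp
      obtain ⟨c, rfl⟩ : ∃ c, p = Polynomial.C c :=
        ⟨p.coeff 0, Polynomial.eq_C_of_natDegree_le_zero hp⟩
      have hq0 := hq.1 0 (Nat.zero_le s)
      have hq0C : q 0 = Polynomial.C ((q 0).coeff 0) :=
        Polynomial.eq_C_of_natDegree_le_zero hq0.1.le
      have ha : (q 0).coeff 0 ≠ 0 := fun h => hq0.2 (by rw [hq0C, h, map_zero])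
      have hrepr : Polynomial.C c = 0 + (c / (q 0).coeff 0) • q 0 := by
        rw [zero_add]
        nth_rewrite 2 [hq0C]
        rw [Polynomial.smul_C, smul_eq_mul, div_mul_cancel₀ c ha]
      rw [hrepr, pInn_linear_right, hQ0 0 (Nat.zero_le s), hDz, mul_zero, add_zero]
    | succ d ih =>
      intro hds p hp
      have hqd := hq.1 (d + 1) hds
      have hlc : (q (d + 1)).coeff (d + 1) ≠ 0 := by
        have := Polynomial.leadingCoeff_ne_zero.2 hqd.2
        rwa [Polynomial.leadingCoeff, hqd.1] at this
      set c : ℝ := p.coeff (d + 1) / (q (d + 1)).coeff (d + 1) with hc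
      have hr : (p - c • q (d + 1)).natDegree ≤ d := by
        refine Polynomial.natDegree_le_iff_coeff_eq_zero.2 fun j hj => ?_
        rw [Polynomial.coeff_sub, Polynomial.coeff_smul, smul_eq_mul]
        rcases eq_or_lt_of_le (Nat.succ_le_of_lt hj) with hj1 | hj1
        · rw [← hj1, hc, div_mul_cancel₀ _ hlc, sub_self]
        · rw [Polynomial.coeff_eq_zero_of_natDegree_lt (lt_of_le_of_lt hp hj1),
            Polynomial.coeff_eq_zero_of_natDegree_lt (by rw [hqd.1]; exact hj1),
            mul_zero, sub_zero]
      have hstep : p = (p - c • q (d + 1)) + c • q (d + 1) := by ring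
      rw [hstep, pInn_linear_right, ih (Nat.le_of_succ_le hds) _ hr,
        hQ0 (d + 1) hds, mul_zero, add_zero]
  -- the difference vanishes on all of A'
  have hroots : ∀ β ∈ Aset' (m : ℝ) X, (Pp - Gp).eval β = 0 := by
    intro β hβ
    set L : Polynomial ℝ := ∏ γ ∈ (Aset' (m : ℝ) X).erase β,
        (Polynomial.C ((β - γ)⁻¹) * (Polynomial.X - Polynomial.C γ)) with hL
    have hdeg : L.natDegree ≤ s := by
      refine le_trans (Polynomial.natDegree_prod_le _ _) ?_
      refine le_trans (Finset.sum_le_card_nsmul _ _ 1 fun γ _ =>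
        le_trans Polynomial.natDegree_mul_le
          (by simp [Polynomial.natDegree_X_sub_C])) ?_
      rw [smul_eq_mul, mul_one, Finset.card_erase_of_mem hβ, hA'card]
      omega
    have hLβ : L.eval β = 1 := by
      rw [hL, Polynomial.eval_prod]
      refine Finset.prod_eq_one fun γ hγ => ?_
      have hβγ : β - γ ≠ 0 := sub_ne_zero.2 (Finset.ne_of_mem_erase hγ).symm
      simp [inv_mul_cancel₀ hβγ]
    have hL0 : ∀ b ∈ Aset' (m : ℝ) X, b ≠ β → (kappa X b : ℝ) * ((Pp - Gp).eval b * L.eval b) = 0 := by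
      intro b hb hbβ
      have : L.eval b = 0 := by
        rw [hL, Polynomial.eval_prod]
        exact Finset.prod_eq_zero (Finset.mem_erase.2 ⟨hbβ, hb⟩) (by simp)
      rw [this, mul_zero, mul_zero]
    have h0 := key s le_rfl L hdeg
    rw [pInn, Finset.sum_eq_single β hL0 (fun h => absurd hβ h)] at h0
    rw [hLβ, mul_one] at h0
    rcases mul_eq_zero.1 h0 with h | h
    · exact absurd h (one_div_ne_zero (pow_ne_zero 2 hn0))
    · rcases mul_eq_zero.1 h with h | h
      · exact absurd h (ne_of_gt (hκpos β hβ))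
      · exact h
  exact prod_X_sub_C_dvd_of_roots _ _ hroots

end
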